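/- Assume the zeroth-order profiles u₁⁰(x) = U x e^{Ux} q and v₁⁰(x) = e^{Ux}q + U(ln U)x e^{Ux}q + U²x²e^{Ux}q for x < 0, with u₁⁰ = 0 and v₁⁰ = q for x ≥ 0, where q is a constant (representing ψ⁰_ηη) and U ∈ (0,1). Then the jump condition [v₁⁰'](0) := v₁⁰'(0⁺) - v₁⁰'(0⁻) = -(1+ln U) u₁⁰'(0⁻) is automatically satisfied for every value of q. -/

import Mathlib

lemma udw_Iio : UniqueDiffWithinAt ℝ (Set.Iio (0:ℝ)) 0 := by
  apply uniqueDiffWithinAt_convex (convex_Iio 0)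
  · rw [interior_Iio]; exact ⟨-1, by norm_num⟩
  · rw [closure_Iio]; exact Set.self_mem_Iic

theorem stmt17 (U : ℝ) (hU : U ∈ Set.Ioo (0:ℝ) 1) (q : ℝ)
    (u v : ℝ → ℝ)
    (hu : u = fun x => if x < 0 then U * x * Real.exp (U * x) * q else 0)
    (hv : v = fun x => if x < 0 then
        Real.exp (U * x) * q + U * Real.log U * x * Real.exp (U * x) * q
          + U ^ 2 * x ^ 2 * Real.exp (U * x) * q
      else q) :
    derivWithin v (Set.Ici 0) 0 - derivWithin v (Set.Iio 0) 0
      = -(1 + Real.log U) * derivWithin u (Set.Iio 0) 0 := by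
  have hexp : HasDerivAt (fun x : ℝ => Real.exp (U * x)) U 0 := by
    have h1 : HasDerivAt (fun x : ℝ => U * x) U 0 := by simpa using (hasDerivAt_id 0).const_mul U
    have := h1.exp
    simpa using this
  -- derivWithin v on Ici 0 is 0
  have hvIci : derivWithin v (Set.Ici 0) 0 = 0 := by
    have : Set.EqOn v (fun _ => q) (Set.Ici 0) := by
      intro x hx
      simp [hv, not_lt.mpr (Set.mem_Ici.mp hx)]
    rw [derivWithin_congr this (by simp [hv])]
    exact congrFun (derivWithin_const _ _) 0
  -- u on Iio 0
  have hu' : HasDerivWithinAt u (U * q) (Set.Iio 0) 0 := by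
    have hg : HasDerivAt (fun x : ℝ => U * x * Real.exp (U * x) * q) (U * q) 0 := by
      have h1 : HasDerivAt (fun x : ℝ => U * x) U 0 := by simpa using (hasDerivAt_id 0).const_mul U
      have := (h1.mul hexp).mul_const q
      exact this.congr_deriv (by simp)
    refine (hg.hasDerivWithinAt).congr ?_ (by simp [hu])
    intro y hy
    simp [hu, Set.mem_Iio.mp hy]
  have huIio : derivWithin u (Set.Iio 0) 0 = U * q := hu'.derivWithin udw_Iio
  -- v on Iio 0
  have hv' : HasDerivWithinAt v (U * q + U * Real.log U * q) (Set.Iio 0) 0 := by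
    have hg : HasDerivAt (fun x : ℝ =>
        Real.exp (U * x) * q + U * Real.log U * x * Real.exp (U * x) * q
          + U ^ 2 * x ^ 2 * Real.exp (U * x) * q) (U * q + U * Real.log U * q) 0 := by
      have t1 : HasDerivAt (fun x : ℝ => Real.exp (U * x) * q) (U * q) 0 :=
        hexp.mul_const q
      have h2 : HasDerivAt (fun x : ℝ => U * Real.log U * x) (U * Real.log U) 0 :=
        by simpa using (hasDerivAt_id 0).const_mul (U * Real.log U)
      have t2 : HasDerivAt (fun x : ℝ => U * Real.log U * x * Real.exp (U * x) * q)
          (U * Real.log U * q) 0 := by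
        have := (h2.mul hexp).mul_const q
        exact this.congr_deriv (by simp)
      have h3 : HasDerivAt (fun x : ℝ => U ^ 2 * x ^ 2) 0 0 := by
        have := (hasDerivAt_pow 2 (0:ℝ)).const_mul (U ^ 2)
        simpa using this
      have t3 : HasDerivAt (fun x : ℝ => U ^ 2 * x ^ 2 * Real.exp (U * x) * q) 0 0 := by
        have := (h3.mul hexp).mul_const q
        exact this.congr_deriv (by simp)
      have := (t1.add t2).add t3
      exact this.congr_deriv (by simp)
    refine (hg.hasDerivWithinAt).congr ?_ (by simp [hv])
    intro y hy
    simp [hv, Set.mem_Iio.mp hy]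
  have hvIio : derivWithin v (Set.Iio 0) 0 = U * q + U * Real.log U * q :=
    hv'.derivWithin udw_Iio
  rw [hvIci, hvIio, huIio]
  ring
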